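/- Let $(X_t(x))$ and $(X_t^R(x))$ be two processes that coincide up to a stopping time $\sigma_R(x)$, and assume: (i) for every fixed $R$ and bounded measurable $f$, $x \mapsto \mathbb{E}[f(X_t^R(x))]$ is continuous; (ii) $\mathbb{P}[\sigma_R(x) \le t] \le e^{c_1 t} V(x)/R$ for a function $V$ bounded on compacts. Then $x \mapsto \mathbb{E}[f(X_t(x))]$ is continuous for every bounded measurable $f$, i.e., the semigroup of $X$ is strong Feller. -/

import Mathlib

open MeasureTheory
open scoped ENNReal

/-- Localization argument for the strong Feller property: if `X(x)` and `X^R(x)` coincide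
up to the stopping time `σ_R(x)`, each localized semigroup `x ↦ 𝔼[f(X_t^R(x))]` is
continuous, and `ℙ[σ_R(x) ≤ t] ≤ e^{c₁t}V(x)/R` with `V` bounded on compacts, then
`x ↦ 𝔼[f(X_t(x))]` is continuous for every bounded measurable `f`. -/
theorem stmt_15 {d : ℕ} {Ω : Type*} [MeasurableSpace Ω]
    (μ : Measure Ω) (hμ : IsProbabilityMeasure μ)
    (X : ℝ → EuclideanSpace ℝ (Fin d) → Ω → EuclideanSpace ℝ (Fin d))
    (XR : ℝ → ℝ → EuclideanSpace ℝ (Fin d) → Ω → EuclideanSpace ℝ (Fin d))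
    (σ : ℝ → EuclideanSpace ℝ (Fin d) → Ω → ℝ≥0∞)
    (V : EuclideanSpace ℝ (Fin d) → ℝ) (c₁ : ℝ)
    (t : ℝ) (ht : 0 ≤ t)
    (hmeasX : ∀ x, Measurable fun ω => X t x ω)
    (hmeasXR : ∀ R x, Measurable fun ω => XR R t x ω)
    (hmeasσ : ∀ R x, Measurable (σ R x))
    -- (coincidence up to the stopping time)
    (hcoinc : ∀ R x ω, ENNReal.ofReal t < σ R x ω → X t x ω = XR R t x ω)
    -- (i) the localized semigroups are strong Feller
    (hSFR : ∀ (R : ℝ) (f : EuclideanSpace ℝ (Fin d) → ℝ), Measurable f →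
      (∃ M, ∀ y, |f y| ≤ M) → Continuous fun x => ∫ ω, f (XR R t x ω) ∂μ)
    -- (ii) the exit-time tail bound
    (htail : ∀ R > (0 : ℝ), ∀ x,
      (μ {ω | σ R x ω ≤ ENNReal.ofReal t}).toReal ≤ Real.exp (c₁ * t) * V x / R)
    -- V is bounded on compacts
    (hVb : ∀ K : Set (EuclideanSpace ℝ (Fin d)), IsCompact K → ∃ M, ∀ x ∈ K, V x ≤ M) :
    ∀ f : EuclideanSpace ℝ (Fin d) → ℝ, Measurable f → (∃ M, ∀ y, |f y| ≤ M) →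
      Continuous fun x => ∫ ω, f (X t x ω) ∂μ := by

  rintro f hf ⟨M, hM⟩
  have hM0 : 0 ≤ M := le_trans (abs_nonneg _) (hM 0)
  have hint : ∀ (g : Ω → EuclideanSpace ℝ (Fin d)), Measurable g →
      Integrable (fun ω => f (g ω)) μ := by
    intro g hg
    refine Integrable.mono' (integrable_const M) ((hf.comp hg).aestronglyMeasurable) ?_
    filter_upwards with ω
    simpa [Real.norm_eq_abs] using hM (g ω)
  have key : ∀ R x, |(∫ ω, f (X t x ω) ∂μ) - ∫ ω, f (XR R t x ω) ∂μ|
      ≤ 2 * M * (μ {ω | σ R x ω ≤ ENNReal.ofReal t}).toReal := by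
    intro R x
    have h1 := hint _ (hmeasX x)
    have h2 := hint _ (hmeasXR R x)
    rw [← integral_sub h1 h2]
    have hS : MeasurableSet {ω | σ R x ω ≤ ENNReal.ofReal t} :=
      measurableSet_le (hmeasσ R x) measurable_const
    calc |∫ ω, (f (X t x ω) - f (XR R t x ω)) ∂μ|
        = ‖∫ ω, (f (X t x ω) - f (XR R t x ω)) ∂μ‖ := (Real.norm_eq_abs _).symm
      _ ≤ ∫ ω, ‖f (X t x ω) - f (XR R t x ω)‖ ∂μ :=
          norm_integral_le_integral_norm fun ω => f (X t x ω) - f (XR R t x ω)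
      _ ≤ ∫ ω, Set.indicator {ω | σ R x ω ≤ ENNReal.ofReal t} (fun _ => 2*M) ω ∂μ := by
          apply integral_mono ((h1.sub h2).norm) ((integrable_const (2*M)).indicator hS)
          intro ω
          show ‖f (X t x ω) - f (XR R t x ω)‖ ≤ _
          by_cases hω : σ R x ω ≤ ENNReal.ofReal t
          · rw [Set.indicator_of_mem (show ω ∈ {ω | σ R x ω ≤ ENNReal.ofReal t} from hω)]
            calc ‖f (X t x ω) - f (XR R t x ω)‖
                ≤ |f (X t x ω)| + |f (XR R t x ω)| := norm_sub_le _ _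
              _ ≤ M + M := add_le_add (hM _) (hM _)
              _ = 2*M := by ring
          · rw [Set.indicator_of_notMem
                (show ω ∉ {ω | σ R x ω ≤ ENNReal.ofReal t} from hω),
                hcoinc R x ω (lt_of_not_ge hω), sub_self, norm_zero]
      _ = 2*M * (μ {ω | σ R x ω ≤ ENNReal.ofReal t}).toReal := by
          rw [integral_indicator_const _ hS]
          simp [mul_comm, measureReal_def]
  rw [Metric.continuous_iff]
  intro x₀ ε hε
  obtain ⟨MK, hMK⟩ := hVb (Metric.closedBall x₀ 1) (isCompact_closedBall x₀ 1)
  set C : ℝ := Real.exp (c₁ * t) * max MK 0 with hCdef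
  have hC0 : 0 ≤ C := mul_nonneg (Real.exp_pos _).le (le_max_right _ _)
  set R : ℝ := max 1 (6 * M * C / ε + 1) with hRdef
  have hR1 : (1:ℝ) ≤ R := le_max_left _ _
  have hRpos : (0:ℝ) < R := lt_of_lt_of_le one_pos hR1
  have hRbig : 6 * M * C / ε < R := lt_of_lt_of_le (lt_add_one _) (le_max_right _ _)
  have h6 : 6 * M * C < R * ε := (div_lt_iff₀ hε).mp hRbig
  have hsmall : ∀ x ∈ Metric.closedBall x₀ 1,
      2 * M * (μ {ω | σ R x ω ≤ ENNReal.ofReal t}).toReal < ε / 3 := by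
    intro x hx
    have h1 := htail R hRpos x
    have hnum : Real.exp (c₁ * t) * V x ≤ C :=
      mul_le_mul_of_nonneg_left (le_max_of_le_left (hMK x hx)) (Real.exp_pos _).le
    have h2 : Real.exp (c₁ * t) * V x / R ≤ C / R := (div_le_div_iff_of_pos_right hRpos).mpr hnum
    have h3 : 2 * M * (μ {ω | σ R x ω ≤ ENNReal.ofReal t}).toReal ≤ 2 * M * (C / R) :=
      mul_le_mul_of_nonneg_left (le_trans h1 h2) (by linarith)
    refine lt_of_le_of_lt h3 ?_
    rw [mul_div_assoc', div_lt_div_iff₀ hRpos (by norm_num : (0:ℝ) < 3)]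
    nlinarith
  have hcont := hSFR R f hf ⟨M, hM⟩
  obtain ⟨δ₀, hδ₀, hδ⟩ := Metric.continuous_iff.mp hcont x₀ (ε/3) (by linarith)
  refine ⟨min δ₀ 1, lt_min hδ₀ one_pos, fun x hx => ?_⟩
  have hxK : x ∈ Metric.closedBall x₀ 1 :=
    Metric.mem_closedBall.mpr (le_of_lt (lt_of_lt_of_le hx (min_le_right _ _)))
  have hx₀K : x₀ ∈ Metric.closedBall x₀ 1 := Metric.mem_closedBall_self one_pos.le
  have hmid := hδ x (lt_of_lt_of_le hx (min_le_left _ _))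
  rw [Real.dist_eq] at hmid ⊢
  have b1 := lt_of_le_of_lt (key R x) (hsmall x hxK)
  have b2 := lt_of_le_of_lt (key R x₀) (hsmall x₀ hx₀K)
  have tri1 := abs_sub_le (∫ ω, f (X t x ω) ∂μ) (∫ ω, f (XR R t x ω) ∂μ)
    (∫ ω, f (X t x₀ ω) ∂μ)
  have tri2 := abs_sub_le (∫ ω, f (XR R t x ω) ∂μ) (∫ ω, f (XR R t x₀ ω) ∂μ)
    (∫ ω, f (X t x₀ ω) ∂μ)
  have hcomm := abs_sub_comm (∫ ω, f (XR R t x₀ ω) ∂μ) (∫ ω, f (X t x₀ ω) ∂μ)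
  linarith
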